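/- Define f: (finite graphs α with a distinguished structure) → ℕ recursively by f(∅) = 1 and f(α) = Σ_{β informative, β ⊊ α} f(β) for nonempty informative α. Then for every nonempty informative α, f(α) ≤ (2|α|)^(|α| − |V(α)| + 1), where |α| is the number of edges and |V(α)| is the number of non-isolated vertices of α. -/

import Mathlib

open scoped Classical

/-- A graph given as a finite set of edges (u,v) with u < v. -/
def edgeVerts (α : Finset (ℕ × ℕ)) : Finset ℕ :=
  α.image Prod.fst ∪ α.image Prod.snd

def edgeDeg (α : Finset (ℕ × ℕ)) (v : ℕ) : ℕ :=
  (α.filter (fun e => e.1 = v ∨ e.2 = v)).card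

def graphOf (α : Finset (ℕ × ℕ)) : SimpleGraph ℕ :=
  SimpleGraph.fromRel (fun u v => (u, v) ∈ α)

/-- α is informative: vertices 1 and 2 belong to V(α), every other vertex of
V(α) has degree ≥ 2, and α is connected (the empty graph is informative by
convention). -/
def Informative (α : Finset (ℕ × ℕ)) : Prop :=
  α = ∅ ∨
    (1 ∈ edgeVerts α ∧ 2 ∈ edgeVerts α ∧
      (∀ v ∈ edgeVerts α, v ≠ 1 → v ≠ 2 → 2 ≤ edgeDeg α v) ∧
      (∀ u ∈ edgeVerts α, ∀ v ∈ edgeVerts α, (graphOf α).Reachable u v))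

open Finset

/-! ### Auxiliary definitions and lemmas -/

/-- The "excess" of a graph: `|α| - |V(α)| + 1` (in ℕ, computed as `|α| + 1 - |V(α)|`). -/
def exc (γ : Finset (ℕ × ℕ)) : ℕ := γ.card + 1 - (edgeVerts γ).card

lemma informative_empty : Informative ∅ := Or.inl rfl

lemma informative_spec {a : Finset (ℕ × ℕ)} (h : Informative a) (hne : a ≠ ∅) :
    1 ∈ edgeVerts a ∧ 2 ∈ edgeVerts a ∧
      (∀ v ∈ edgeVerts a, v ≠ 1 → v ≠ 2 → 2 ≤ edgeDeg a v) ∧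
      (∀ u ∈ edgeVerts a, ∀ v ∈ edgeVerts a, (graphOf a).Reachable u v) :=
  h.resolve_left hne

lemma mem_edgeVerts {γ : Finset (ℕ × ℕ)} {v : ℕ} :
    v ∈ edgeVerts γ ↔ ∃ e ∈ γ, e.1 = v ∨ e.2 = v := by
  simp only [edgeVerts, mem_union, mem_image]
  constructor
  · rintro (⟨e, he, rfl⟩ | ⟨e, he, rfl⟩)
    exacts [⟨e, he, Or.inl rfl⟩, ⟨e, he, Or.inr rfl⟩]
  · rintro ⟨e, he, (rfl | rfl)⟩
    exacts [Or.inl ⟨e, he, rfl⟩, Or.inr ⟨e, he, rfl⟩]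

lemma mem_edgeVerts_fst {γ : Finset (ℕ × ℕ)} {e : ℕ × ℕ} (h : e ∈ γ) :
    e.1 ∈ edgeVerts γ := mem_edgeVerts.2 ⟨e, h, Or.inl rfl⟩

lemma mem_edgeVerts_snd {γ : Finset (ℕ × ℕ)} {e : ℕ × ℕ} (h : e ∈ γ) :
    e.2 ∈ edgeVerts γ := mem_edgeVerts.2 ⟨e, h, Or.inr rfl⟩

lemma edgeVerts_mono {a b : Finset (ℕ × ℕ)} (h : a ⊆ b) : edgeVerts a ⊆ edgeVerts b :=
  union_subset_union (image_subset_image h) (image_subset_image h)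

lemma edgeDeg_pos {γ : Finset (ℕ × ℕ)} {v : ℕ} (h : v ∈ edgeVerts γ) : 1 ≤ edgeDeg γ v := by
  rw [mem_edgeVerts] at h
  obtain ⟨e, he, hv⟩ := h
  exact card_pos.2 ⟨e, mem_filter.2 ⟨he, hv⟩⟩

lemma edgeDeg_mono {a b : Finset (ℕ × ℕ)} (h : a ⊆ b) (v : ℕ) :
    edgeDeg a v ≤ edgeDeg b v :=
  card_le_card (filter_subset_filter _ h)

lemma graphOf_mono {a b : Finset (ℕ × ℕ)} (h : a ⊆ b) : graphOf a ≤ graphOf b := by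
  intro u v huv
  rw [graphOf, SimpleGraph.fromRel_adj] at huv ⊢
  exact ⟨huv.1, huv.2.imp (fun hx => h hx) (fun hx => h hx)⟩

/-- double counting: summing incidences vertex-first equals edge-first -/
lemma double_count (γ : Finset (ℕ × ℕ)) (W : Finset ℕ) :
    ∑ v ∈ W, (γ.filter (fun e => e.1 = v ∨ e.2 = v)).card
      = ∑ e ∈ γ, (W.filter (fun v => e.1 = v ∨ e.2 = v)).card := by
  simp only [card_filter]
  rw [Finset.sum_comm]

lemma filter_pair_card_le (e : ℕ × ℕ) (W : Finset ℕ) :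
    (W.filter (fun v => e.1 = v ∨ e.2 = v)).card ≤ 2 := by
  have hsub : W.filter (fun v => e.1 = v ∨ e.2 = v) ⊆ {e.1, e.2} := by
    intro v hv
    rcases (mem_filter.1 hv).2 with h | h <;> simp [← h]
  calc (W.filter (fun v => e.1 = v ∨ e.2 = v)).card ≤ ({e.1, e.2} : Finset ℕ).card :=
        card_le_card hsub
    _ ≤ 2 := card_insert_le _ _ |>.trans (by simp)

lemma incidences_le (γ : Finset (ℕ × ℕ)) (W : Finset ℕ) :
    ∑ v ∈ W, (γ.filter (fun e => e.1 = v ∨ e.2 = v)).card ≤ 2 * γ.card := by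
  rw [double_count]
  calc ∑ e ∈ γ, (W.filter (fun v => e.1 = v ∨ e.2 = v)).card
      ≤ ∑ _e ∈ γ, 2 := sum_le_sum fun e _ => filter_pair_card_le e W
    _ = 2 * γ.card := by rw [sum_const, smul_eq_mul, mul_comm]

/-- Lemma 0: an informative nonempty graph has at most `|γ| + 1` vertices. -/
lemma verts_card_le {γ : Finset (ℕ × ℕ)} (h : Informative γ) (hne : γ ≠ ∅) :
    (edgeVerts γ).card ≤ γ.card + 1 := by
  obtain ⟨h1, h2, hdeg, -⟩ := informative_spec h hne
  set V := edgeVerts γ with hV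
  have hlow : ∀ v ∈ V, (if v = 1 ∨ v = 2 then 1 else 2) ≤ edgeDeg γ v := by
    intro v hv
    split
    · exact edgeDeg_pos hv
    · next hcond => push_neg at hcond; exact hdeg v hv hcond.1 hcond.2
  have hsum1 : ∑ v ∈ V, (if v = 1 ∨ v = 2 then 1 else 2) ≤ ∑ v ∈ V, edgeDeg γ v :=
    sum_le_sum hlow
  have hsum2 : ∑ v ∈ V, edgeDeg γ v ≤ 2 * γ.card := incidences_le γ V
  have hsplit : (∑ v ∈ V, (if v = 1 ∨ v = 2 then 1 else 2))
      + (V.filter (fun v => v = 1 ∨ v = 2)).card = 2 * V.card := by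
    rw [card_filter, ← sum_add_distrib]
    have : ∀ v ∈ V, ((if v = 1 ∨ v = 2 then 1 else 2) + (if v = 1 ∨ v = 2 then 1 else 0)) = 2 := by
      intro v _; split <;> rfl
    rw [Finset.sum_congr rfl this, sum_const, smul_eq_mul, mul_comm]
  have hfilt : V.filter (fun v => v = 1 ∨ v = 2) = {1, 2} := by
    ext v
    simp only [mem_filter, mem_insert, mem_singleton]
    constructor
    · exact fun h => h.2
    · rintro (rfl | rfl)
      · exact ⟨h1, Or.inl rfl⟩
      · exact ⟨h2, Or.inr rfl⟩
  rw [hfilt] at hsplit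
  have : ({1, 2} : Finset ℕ).card = 2 := by decide
  omega

/-- The key "drop" lemma: a nonempty informative proper subgraph of an informative
graph has strictly smaller excess (stated as a cardinality inequality). -/
lemma drop_card {a b : Finset (ℕ × ℕ)} (ha : Informative a) (hb : Informative b)
    (hbne : b ≠ ∅) (hss : b ⊂ a) :
    (edgeVerts a).card + b.card + 1 ≤ a.card + (edgeVerts b).card := by
  have hane : a ≠ ∅ := by
    intro h
    exact hbne (subset_empty.1 (h ▸ hss.subset))
  obtain ⟨h1a, h2a, hdega, hreacha⟩ := informative_spec ha hane
  obtain ⟨h1b, h2b, -, -⟩ := informative_spec hb hbne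
  set γ := a \ b with hγ
  set New := edgeVerts a \ edgeVerts b with hNew
  have hVsub : edgeVerts b ⊆ edgeVerts a := edgeVerts_mono hss.subset
  have hNewcard : New.card = (edgeVerts a).card - (edgeVerts b).card := card_sdiff_of_subset hVsub
  have hγcard : γ.card = a.card - b.card := card_sdiff_of_subset hss.subset
  have hVle : (edgeVerts b).card ≤ (edgeVerts a).card := card_le_card hVsub
  have hcle : b.card ≤ a.card := card_le_card hss.subset
  by_contra hcon
  have hNge : γ.card ≤ New.card := by omega
  -- every vertex of New has ≥ 2 incident edges, all of which lie in γ
  have keyA : ∀ v ∈ New, 2 ≤ (γ.filter (fun e => e.1 = v ∨ e.2 = v)).card := by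
    intro v hv
    have hva : v ∈ edgeVerts a := (mem_sdiff.1 hv).1
    have hvb : v ∉ edgeVerts b := (mem_sdiff.1 hv).2
    have hne1 : v ≠ 1 := fun h => hvb (h ▸ h1b)
    have hne2 : v ≠ 2 := fun h => hvb (h ▸ h2b)
    have hdv : 2 ≤ edgeDeg a v := hdega v hva hne1 hne2
    have hsubf : a.filter (fun e => e.1 = v ∨ e.2 = v)
        ⊆ γ.filter (fun e => e.1 = v ∨ e.2 = v) := by
      intro e he
      have hea := (mem_filter.1 he).1
      have hinc := (mem_filter.1 he).2
      refine mem_filter.2 ⟨mem_sdiff.2 ⟨hea, ?_⟩, hinc⟩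
      intro heb
      rcases hinc with h | h
      · exact hvb (h ▸ mem_edgeVerts_fst heb)
      · exact hvb (h ▸ mem_edgeVerts_snd heb)
    exact hdv.trans (card_le_card hsubf)
  have hchain : 2 * New.card ≤ ∑ v ∈ New, (γ.filter (fun e => e.1 = v ∨ e.2 = v)).card := by
    calc 2 * New.card = ∑ _v ∈ New, 2 := by rw [sum_const, smul_eq_mul, mul_comm]
      _ ≤ _ := sum_le_sum keyA
  have hup : ∑ v ∈ New, (γ.filter (fun e => e.1 = v ∨ e.2 = v)).card ≤ 2 * γ.card :=
    incidences_le γ New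
  -- equality throughout
  have hEq : ∑ e ∈ γ, (New.filter (fun v => e.1 = v ∨ e.2 = v)).card = 2 * γ.card := by
    have := double_count γ New
    omega
  have hall : ∀ e ∈ γ, (New.filter (fun v => e.1 = v ∨ e.2 = v)).card = 2 := by
    by_contra hnot
    push_neg at hnot
    obtain ⟨e0, he0, hne0⟩ := hnot
    have hlt : (New.filter (fun v => e0.1 = v ∨ e0.2 = v)).card < 2 :=
      lt_of_le_of_ne (filter_pair_card_le e0 New) hne0
    have : ∑ e ∈ γ, (New.filter (fun v => e.1 = v ∨ e.2 = v)).card < ∑ _e ∈ γ, 2 :=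
      Finset.sum_lt_sum (fun e _ => filter_pair_card_le e New) ⟨e0, he0, hlt⟩
    rw [sum_const, smul_eq_mul, mul_comm] at this
    omega
  have hboth : ∀ e ∈ γ, e.1 ∈ New ∧ e.2 ∈ New := by
    intro e he
    have hsub : New.filter (fun v => e.1 = v ∨ e.2 = v) ⊆ {e.1, e.2} := by
      intro v hv
      rcases (mem_filter.1 hv).2 with h | h <;> simp [← h]
    have hcard2 : ({e.1, e.2} : Finset ℕ).card ≤ (New.filter (fun v => e.1 = v ∨ e.2 = v)).card := by
      rw [hall e he]
      exact card_insert_le _ _ |>.trans (by simp)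
    have heq := eq_of_subset_of_card_le hsub hcard2
    constructor
    · have : e.1 ∈ ({e.1, e.2} : Finset ℕ) := by simp
      rw [← heq] at this
      exact (mem_filter.1 this).1
    · have : e.2 ∈ ({e.1, e.2} : Finset ℕ) := by simp
      rw [← heq] at this
      exact (mem_filter.1 this).1
  -- closure of New under adjacency
  have hclo : ∀ u w : ℕ, (graphOf a).Adj u w → w ∈ New → u ∈ New := by
    intro u w hadj hw
    rw [graphOf, SimpleGraph.fromRel_adj] at hadj
    have hwb : w ∉ edgeVerts b := (mem_sdiff.1 hw).2
    rcases hadj.2 with h | h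
    · have hγmem : (u, w) ∈ γ := by
        refine mem_sdiff.2 ⟨h, fun hb' => hwb ?_⟩
        exact mem_edgeVerts_snd hb'
      exact (hboth _ hγmem).1
    · have hγmem : (w, u) ∈ γ := by
        refine mem_sdiff.2 ⟨h, fun hb' => hwb ?_⟩
        exact mem_edgeVerts_fst hb'
      exact (hboth _ hγmem).2
  -- walk closure
  have hwalk : ∀ {x y : ℕ}, (graphOf a).Walk x y → y ∈ New → x ∈ New := by
    intro x y w
    induction w with
    | nil => exact id
    | cons h _ ih => exact fun hy => hclo _ _ h (ih hy)
  -- New is nonempty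
  have hγne : γ.Nonempty := by
    obtain ⟨e, hea, heb⟩ := exists_of_ssubset hss
    exact ⟨e, mem_sdiff.2 ⟨hea, heb⟩⟩
  have hNewne : New.Nonempty := by
    rw [← card_pos]
    have := card_pos.2 hγne
    omega
  obtain ⟨v0, hv0⟩ := hNewne
  have hv0a : v0 ∈ edgeVerts a := (mem_sdiff.1 hv0).1
  have hreach : (graphOf a).Reachable 1 v0 := hreacha 1 h1a v0 hv0a
  obtain ⟨w⟩ := hreach
  have h1New : (1 : ℕ) ∈ New := hwalk w hv0
  exact (mem_sdiff.1 h1New).2 h1b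

lemma exc_lt {a b : Finset (ℕ × ℕ)} (ha : Informative a) (hb : Informative b)
    (hbne : b ≠ ∅) (hss : b ⊂ a) : exc b < exc a := by
  have hane : a ≠ ∅ := fun h => hbne (subset_empty.1 (h ▸ hss.subset))
  have h0a := verts_card_le ha hane
  have h0b := verts_card_le hb hbne
  have hd := drop_card ha hb hbne hss
  have hV := card_le_card (edgeVerts_mono hss.subset)
  have hc := card_le_card hss.subset
  unfold exc
  omega

/-- Informative graphs are closed under union. -/
lemma informative_union {a b : Finset (ℕ × ℕ)} (ha : Informative a) (hb : Informative b) :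
    Informative (a ∪ b) := by
  rcases eq_or_ne a ∅ with rfl | hane
  · simpa using hb
  rcases eq_or_ne b ∅ with rfl | hbne
  · simpa using ha
  obtain ⟨h1a, h2a, hdega, hra⟩ := informative_spec ha hane
  obtain ⟨h1b, h2b, hdegb, hrb⟩ := informative_spec hb hbne
  have hVu : ∀ v, v ∈ edgeVerts (a ∪ b) ↔ v ∈ edgeVerts a ∨ v ∈ edgeVerts b := by
    intro v
    simp only [mem_edgeVerts, mem_union]
    constructor
    · rintro ⟨e, (he | he), hv⟩
      exacts [Or.inl ⟨e, he, hv⟩, Or.inr ⟨e, he, hv⟩]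
    · rintro (⟨e, he, hv⟩ | ⟨e, he, hv⟩)
      exacts [⟨e, Or.inl he, hv⟩, ⟨e, Or.inr he, hv⟩]
  right
  refine ⟨(hVu 1).2 (Or.inl h1a), (hVu 2).2 (Or.inl h2a), ?_, ?_⟩
  · intro v hv hv1 hv2
    rcases (hVu v).1 hv with h | h
    · exact (hdega v h hv1 hv2).trans (edgeDeg_mono subset_union_left v)
    · exact (hdegb v h hv1 hv2).trans (edgeDeg_mono subset_union_right v)
  · have key : ∀ w ∈ edgeVerts (a ∪ b), (graphOf (a ∪ b)).Reachable w 1 := by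
      intro w hw
      rcases (hVu w).1 hw with h | h
      · exact (hra w h 1 h1a).mono (graphOf_mono subset_union_left)
      · exact (hrb w h 1 h1b).mono (graphOf_mono subset_union_right)
    intro u hu v hv
    exact (key u hu).trans (key v hv).symm

/-- The maximal informative subgraph of a graph. -/
noncomputable def maxInf (t : Finset (ℕ × ℕ)) : Finset (ℕ × ℕ) :=
  (t.powerset.filter Informative).sup id

lemma maxInf_subset (t : Finset (ℕ × ℕ)) : maxInf t ⊆ t := by
  show maxInf t ≤ t
  apply Finset.sup_le
  intro S hS
  exact mem_powerset.1 (mem_filter.1 hS).1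

lemma subset_maxInf {S t : Finset (ℕ × ℕ)} (hI : Informative S) (hsub : S ⊆ t) :
    S ⊆ maxInf t :=
  Finset.le_sup (f := id) (mem_filter.2 ⟨mem_powerset.2 hsub, hI⟩)

lemma informative_maxInf (t : Finset (ℕ × ℕ)) : Informative (maxInf t) := by
  apply Finset.sup_induction
  · exact informative_empty
  · intro x hx y hy
    rw [Finset.sup_eq_union]
    exact informative_union hx hy
  · exact fun S hS => (mem_filter.1 hS).2

/-- Hitting-set lemma: for informative β ⊆ α with excess gap ≤ d, there is a set S of at
most d edges outside β meeting every informative strict extension of β inside α. -/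
lemma hitting : ∀ d : ℕ, ∀ a b : Finset (ℕ × ℕ), Informative a → Informative b →
    b ≠ ∅ → b ⊆ a → exc a ≤ exc b + d →
    ∃ S : Finset (ℕ × ℕ), S ⊆ a ∧ (∀ e ∈ S, e ∉ b) ∧ S.card ≤ d ∧
      ∀ γ, Informative γ → b ⊂ γ → γ ⊆ a → ∃ e ∈ γ, e ∈ S := by
  intro d
  induction d with
  | zero =>
    intro a b hIa hIb hbne hba hexc
    refine ⟨∅, empty_subset _, by simp, le_refl _, ?_⟩
    intro γ hIγ hbγ hγa
    exfalso
    have hγne : γ ≠ ∅ := fun h => hbne (subset_empty.1 (h ▸ hbγ.subset))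
    have h1 : exc b < exc γ := exc_lt hIγ hIb hbne hbγ
    rcases eq_or_ne γ a with rfl | hne'
    · omega
    · have h2 : exc γ < exc a := exc_lt hIa hIγ hγne (ssubset_of_subset_of_ne hγa hne')
      omega
  | succ d ih =>
    intro a b hIa hIb hbne hba hexc
    by_cases hext : ∃ γ, Informative γ ∧ b ⊂ γ ∧ γ ⊆ a
    · obtain ⟨γ0, hIγ0, hbγ0, hγ0a⟩ := hext
      obtain ⟨s, hsγ0, hsb⟩ := exists_of_ssubset hbγ0
      have hsa : s ∈ a := hγ0a hsγ0
      set A := maxInf (a.erase s) with hA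
      have hIA : Informative A := informative_maxInf _
      have hbA : b ⊆ A := subset_maxInf hIb (subset_erase.2 ⟨hba, hsb⟩)
      have hAa : A ⊆ a := (maxInf_subset _).trans (erase_subset _ _)
      have hsA : s ∉ A := fun h => (notMem_erase s a) (maxInf_subset _ h)
      have hAss : A ⊂ a := ssubset_of_subset_of_ne hAa (fun h => hsA (h ▸ hsa))
      have hAne : A ≠ ∅ := fun h => hbne (subset_empty.1 (h ▸ hbA))
      have hdrop : exc A < exc a := exc_lt hIa hIA hAne hAss
      obtain ⟨S', hS'A, hS'b, hS'card, hS'hit⟩ := ih A b hIA hIb hbne hbA (by omega)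
      refine ⟨insert s S', ?_, ?_, ?_, ?_⟩
      · exact insert_subset hsa (hS'A.trans hAa)
      · intro e he
        rcases mem_insert.1 he with rfl | he'
        · exact hsb
        · exact hS'b e he'
      · exact (card_insert_le _ _).trans (by omega)
      · intro γ hIγ hbγ hγa
        by_cases hsγ : s ∈ γ
        · exact ⟨s, hsγ, mem_insert_self _ _⟩
        · have hγA : γ ⊆ A := subset_maxInf hIγ (subset_erase.2 ⟨hγa, hsγ⟩)
          obtain ⟨e, heγ, heS'⟩ := hS'hit γ hIγ hbγ hγA
          exact ⟨e, heγ, mem_insert_of_mem heS'⟩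
    · exact ⟨∅, empty_subset _, by simp, Nat.zero_le _,
        fun γ hIγ hbγ hγa => absurd ⟨γ, hIγ, hbγ, hγa⟩ hext⟩

/-- β can be recovered from a hitting set. -/
lemma recover {a b S : Finset (ℕ × ℕ)} (hIb : Informative b) (hba : b ⊆ a)
    (hdisj : ∀ e ∈ S, e ∉ b)
    (hhit : ∀ γ, Informative γ → b ⊂ γ → γ ⊆ a → ∃ e ∈ γ, e ∈ S) :
    b = maxInf (a \ S) := by
  have hbsub : b ⊆ a \ S := fun e he => mem_sdiff.2 ⟨hba he, fun hs => hdisj e hs he⟩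
  have h1 : b ⊆ maxInf (a \ S) := subset_maxInf hIb hbsub
  have hM : Informative (maxInf (a \ S)) := informative_maxInf _
  have hMsub : maxInf (a \ S) ⊆ a \ S := maxInf_subset _
  refine Subset.antisymm h1 ?_
  by_contra hnot
  have hss : b ⊂ maxInf (a \ S) :=
    ssubset_of_subset_of_ne h1 (fun h => hnot (h ▸ Subset.refl _))
  obtain ⟨e, heM, heS⟩ := hhit _ hM hss (hMsub.trans (sdiff_subset))
  exact (mem_sdiff.1 (hMsub heM)).2 heS

/-- Every nonempty informative proper subgraph is coded by a set of exactly
`exc α - exc β` edges. -/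
lemma exists_code {a b : Finset (ℕ × ℕ)} (hIa : Informative a) (hIb : Informative b)
    (hbne : b ≠ ∅) (hss : b ⊂ a) :
    ∃ S : Finset (ℕ × ℕ), S ⊆ a ∧ S.card = exc a - exc b ∧ b = maxInf (a \ S) := by
  have hane : a ≠ ∅ := fun h => hbne (subset_empty.1 (h ▸ hss.subset))
  have hlt : exc b < exc a := exc_lt hIa hIb hbne hss
  obtain ⟨S0, hS0a, hS0b, hS0card, hS0hit⟩ :=
    hitting (exc a - exc b) a b hIa hIb hbne hss.subset (by omega)
  have hS0sub : S0 ⊆ a \ b := fun e he => mem_sdiff.2 ⟨hS0a he, hS0b e he⟩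
  have hcards : exc a - exc b ≤ (a \ b).card := by
    rw [card_sdiff_of_subset hss.subset]
    have h0a := verts_card_le hIa hane
    have h0b := verts_card_le hIb hbne
    have hV := card_le_card (edgeVerts_mono hss.subset)
    have hc := card_le_card hss.subset
    unfold exc
    omega
  obtain ⟨S, hS0S, hSsub, hScard⟩ := exists_subsuperset_card_eq hS0sub hS0card hcards
  have hdisj : ∀ e ∈ S, e ∉ b := fun e he => (mem_sdiff.1 (hSsub he)).2
  refine ⟨S, hSsub.trans sdiff_subset, hScard, ?_⟩
  apply recover hIb hss.subset hdisj
  intro γ hIγ hbγ hγa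
  obtain ⟨e, heγ, heS0⟩ := hS0hit γ hIγ hbγ hγa
  exact ⟨e, heγ, hS0S heS0⟩

lemma two_pow_geom_sum (E : ℕ) : ∑ d ∈ Icc 1 E, 2 ^ (E - d) = 2 ^ E - 1 := by
  induction E with
  | zero => simp
  | succ E ih =>
    rw [Finset.sum_Icc_succ_top (by omega : 1 ≤ E + 1)]
    have hcong : ∀ d ∈ Icc 1 E, 2 ^ (E + 1 - d) = 2 * 2 ^ (E - d) := by
      intro d hd
      have hd' : d ≤ E := (mem_Icc.1 hd).2
      have : E + 1 - d = (E - d) + 1 := by omega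
      rw [this, pow_succ, mul_comm]
    rw [Finset.sum_congr rfl hcong, ← Finset.mul_sum, ih]
    have htop : E + 1 - (E + 1) = 0 := by omega
    rw [htop, pow_zero]
    have h1 : 1 ≤ 2 ^ E := Nat.one_le_two_pow
    have h2 : 2 ^ (E + 1) = 2 * 2 ^ E := by rw [pow_succ, mul_comm]
    omega

/-- Main auxiliary induction. -/
lemma main_aux (f : Finset (ℕ × ℕ) → ℕ)
    (hbase : f ∅ = 1)
    (hrec : ∀ α : Finset (ℕ × ℕ), Informative α → α ≠ ∅ →
      f α = ∑ β ∈ (α.powerset.erase α).filter Informative, f β) :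
    ∀ n : ℕ, ∀ a : Finset (ℕ × ℕ), a.card ≤ n → Informative a → a ≠ ∅ →
      f a ≤ (2 * a.card) ^ exc a := by
  intro n
  induction n with
  | zero =>
    intro a hc hI hne
    exact absurd (card_eq_zero.1 (Nat.le_zero.1 hc)) hne
  | succ n ih =>
    intro a hcard hI hne
    have hAcard : 1 ≤ a.card := card_pos.2 (nonempty_iff_ne_empty.2 hne)
    set P := (a.powerset.erase a).filter Informative with hP
    have hPempty : (∅ : Finset (ℕ × ℕ)) ∈ P := by
      refine mem_filter.2 ⟨mem_erase.2 ⟨Ne.symm hne, mem_powerset.2 (empty_subset _)⟩,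
        informative_empty⟩
    rw [hrec a hI hne, ← hP, ← Finset.add_sum_erase _ f hPempty, hbase]
    set Q := P.erase ∅ with hQdef
    have hQ : ∀ b ∈ Q, Informative b ∧ b ≠ ∅ ∧ b ⊂ a := by
      intro b hb
      have h1 := mem_erase.1 hb
      have h2 := mem_filter.1 h1.2
      have h3 := mem_erase.1 h2.1
      exact ⟨h2.2, h1.1, ssubset_of_subset_of_ne (mem_powerset.1 h3.2) h3.1⟩
    set E := exc a with hE
    set A := a.card with hAdef
    -- coding function via choice
    have key : ∀ b : Finset (ℕ × ℕ), ∃ S : Finset (ℕ × ℕ),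
        b ∈ Q → S ⊆ a ∧ S.card = E - exc b ∧ b = maxInf (a \ S) := by
      intro b
      by_cases hb : b ∈ Q
      · obtain ⟨hIb, hbne, hbss⟩ := hQ b hb
        obtain ⟨S, h1, h2, h3⟩ := exists_code hI hIb hbne hbss
        exact ⟨S, fun _ => ⟨h1, h2, h3⟩⟩
      · exact ⟨∅, fun h => absurd h hb⟩
    choose Φ hΦ using key
    have hinj : ∀ b1 ∈ Q, ∀ b2 ∈ Q, Φ b1 = Φ b2 → b1 = b2 := by
      intro b1 h1 b2 h2 heq
      rw [(hΦ b1 h1).2.2, (hΦ b2 h2).2.2, heq]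
    have hterm : ∀ b ∈ Q, f b ≤ (2 * A) ^ (E - (Φ b).card) := by
      intro b hb
      obtain ⟨hIb, hbne, hbss⟩ := hQ b hb
      have hblt : b.card < a.card := card_lt_card hbss
      have h1 : f b ≤ (2 * b.card) ^ exc b := ih b (by omega) hIb hbne
      have hlt : exc b < E := exc_lt hI hIb hbne hbss
      have hcardΦ : (Φ b).card = E - exc b := (hΦ b hb).2.1
      have heq : E - (Φ b).card = exc b := by omega
      rw [heq]
      exact h1.trans (Nat.pow_le_pow_left (by omega) _)
    set T := (Finset.Icc 1 E).biUnion (fun d => a.powersetCard d) with hT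
    have himg : Q.image Φ ⊆ T := by
      intro S hS
      obtain ⟨b, hb, rfl⟩ := mem_image.1 hS
      obtain ⟨hIb, hbne, hbss⟩ := hQ b hb
      have hlt : exc b < E := exc_lt hI hIb hbne hbss
      have hcardΦ : (Φ b).card = E - exc b := (hΦ b hb).2.1
      refine mem_biUnion.2 ⟨E - exc b, mem_Icc.2 ⟨by omega, by omega⟩, ?_⟩
      exact mem_powersetCard.2 ⟨(hΦ b hb).1, hcardΦ⟩
    have hdisjT : (↑(Finset.Icc 1 E) : Set ℕ).PairwiseDisjoint
        (fun d => a.powersetCard d) := by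
      intro d1 _ d2 _ hne12
      simp only [Function.onFun]
      rw [Finset.disjoint_left]
      intro S h1 h2
      exact hne12 ((mem_powersetCard.1 h1).2 ▸ (mem_powersetCard.1 h2).2 ▸ rfl)
    have hTsum : ∑ S ∈ T, (2 * A) ^ (E - S.card) ≤ A ^ E * (2 ^ E - 1) := by
      rw [hT, Finset.sum_biUnion hdisjT]
      have hinner : ∀ d ∈ Finset.Icc 1 E,
          ∑ S ∈ a.powersetCard d, (2 * A) ^ (E - S.card) ≤ 2 ^ (E - d) * A ^ E := by
        intro d hd
        have hdE : d ≤ E := (mem_Icc.1 hd).2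
        have hconst : ∀ S ∈ a.powersetCard d, (2 * A) ^ (E - S.card) = (2 * A) ^ (E - d) := by
          intro S hS
          rw [(mem_powersetCard.1 hS).2]
        rw [Finset.sum_congr rfl hconst, sum_const, smul_eq_mul, card_powersetCard]
        have hch : A.choose d ≤ A ^ d := Nat.choose_le_pow A d
        calc A.choose d * (2 * A) ^ (E - d) ≤ A ^ d * (2 * A) ^ (E - d) :=
              Nat.mul_le_mul_right _ hch
          _ = A ^ d * (2 ^ (E - d) * A ^ (E - d)) := by rw [mul_pow]
          _ = 2 ^ (E - d) * (A ^ d * A ^ (E - d)) := by ring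
          _ = 2 ^ (E - d) * A ^ E := by
              have hde : d + (E - d) = E := by omega
              rw [← pow_add, hde]
      calc ∑ d ∈ Finset.Icc 1 E, ∑ S ∈ a.powersetCard d, (2 * A) ^ (E - S.card)
          ≤ ∑ d ∈ Finset.Icc 1 E, 2 ^ (E - d) * A ^ E := sum_le_sum hinner
        _ = (∑ d ∈ Finset.Icc 1 E, 2 ^ (E - d)) * A ^ E := by rw [← Finset.sum_mul]
        _ = (2 ^ E - 1) * A ^ E := by rw [two_pow_geom_sum]
        _ = A ^ E * (2 ^ E - 1) := by ring
    calc 1 + ∑ b ∈ Q, f b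
        ≤ 1 + ∑ b ∈ Q, (2 * A) ^ (E - (Φ b).card) := by
          exact Nat.add_le_add_left (sum_le_sum hterm) 1
      _ = 1 + ∑ S ∈ Q.image Φ, (2 * A) ^ (E - S.card) := by rw [sum_image hinj]
      _ ≤ 1 + ∑ S ∈ T, (2 * A) ^ (E - S.card) := by
          exact Nat.add_le_add_left (sum_le_sum_of_subset himg) 1
      _ ≤ 1 + A ^ E * (2 ^ E - 1) := Nat.add_le_add_left hTsum 1
      _ ≤ (2 * A) ^ E := by
          rw [mul_pow]
          have h1 : 1 ≤ A ^ E := Nat.one_le_pow _ _ (by omega)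
          have h2 : 1 ≤ 2 ^ E := Nat.one_le_two_pow
          have h3 : A ^ E * (2 ^ E - 1) + A ^ E = A ^ E * 2 ^ E := by
            rw [← Nat.mul_succ]
            congr 1
            omega
          have h4 : 2 ^ E * A ^ E = A ^ E * 2 ^ E := by ring
          omega

/-- Lemma 5.4: if f satisfies f(∅) = 1 and, for every nonempty informative α,
f(α) = Σ over proper informative subgraphs β ⊊ α of f(β), then
f(α) ≤ (2|α|)^(|α| − |V(α)| + 1) for every nonempty informative α. -/
theorem informative_recursion_bound (f : Finset (ℕ × ℕ) → ℕ)
    (hbase : f ∅ = 1)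
    (hrec : ∀ α : Finset (ℕ × ℕ), Informative α → α ≠ ∅ →
      f α = ∑ β ∈ (α.powerset.erase α).filter Informative, f β) :
    ∀ α : Finset (ℕ × ℕ), Informative α → α ≠ ∅ →
      f α ≤ (2 * α.card) ^ (α.card - (edgeVerts α).card + 1) := by
  intro a hI hne
  have h := main_aux f hbase hrec a.card a le_rfl hI hne
  refine h.trans (Nat.pow_le_pow_right ?_ ?_)
  · have := card_pos.2 (nonempty_iff_ne_empty.2 hne)
    omega
  · have h0 := verts_card_le hI hne
    unfold exc
    omega
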